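/- For a connected graph Γ, the restriction of the edge functionals to the cut space G_Γ = Im ∂*, excluding the loops (which restrict to zero), forms a unimodular system whose complexity equals the number of spanning trees of Γ. -/

import Mathlib

/-- The coboundary map `∂* : C₀(Γ,ℝ) → C₁(Γ,ℝ)` of an oriented graph. -/
noncomputable def cobdry {V E : Type*} (tail head : E → V) :
    (V → ℝ) →ₗ[ℝ] (E → ℝ) :=
  LinearMap.pi fun e => (LinearMap.proj (head e) : (V → ℝ) →ₗ[ℝ] ℝ) - LinearMap.proj (tail e)

/-- Connectivity using only edges from the set `T`. -/
def GraphConnVia {V E : Type*} (tail head : E → V) (T : Set E) : Prop :=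
  ∀ v w : V, Relation.ReflTransGen
    (fun a b => ∃ e ∈ T, (tail e = a ∧ head e = b) ∨ (tail e = b ∧ head e = a)) v w

/-- A loop is an edge with equal endpoints. -/
def IsLoop {V E : Type*} (tail head : E → V) (e : E) : Prop := tail e = head e

/-- `S` is a maximal linearly independent subset of the family of forms `ξ`. -/
def MaxLinIndep {ι : Type*} {U : Type*} [AddCommGroup U] [Module ℝ U]
    (ξ : ι → Module.Dual ℝ U) (S : Set ι) : Prop :=
  LinearIndependent ℝ (fun i : S => ξ i) ∧
    ∀ T : Set ι, S ⊆ T → LinearIndependent ℝ (fun i : T => ξ i) → T = S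

namespace Stmt8Aux

set_option linter.unusedSectionVars false

noncomputable section

variable {V E : Type*} [Fintype V] [Fintype E] [DecidableEq V] [DecidableEq E]
  (tail head : E → V)

instance : DecidablePred (IsLoop tail head) :=
  fun e => decidable_of_iff (tail e = head e) Iff.rfl

theorem cobdry_apply (f : V → ℝ) (e : E) :
    cobdry tail head f e = f (head e) - f (tail e) := rfl

/-- incidence vector of an edge -/
def vvec (e : E) : V → ℝ := Pi.single (head e) 1 - Pi.single (tail e) 1

abbrev Gsp := LinearMap.range (cobdry tail head)

abbrev xiF (e : {e : E // ¬ IsLoop tail head e}) : Module.Dual ℝ (Gsp tail head) :=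
  (LinearMap.proj e.1).comp (Gsp tail head).subtype

/-- embedding of the dual of the cut space into `ℝ^V` -/
def phi : Module.Dual ℝ (Gsp tail head) →ₗ[ℝ] (V → ℝ) :=
  LinearMap.pi fun v => LinearMap.applyₗ
    (⟨cobdry tail head (Pi.single v 1), LinearMap.mem_range_self _ _⟩ : Gsp tail head)

theorem phi_apply (ξ : Module.Dual ℝ (Gsp tail head)) (v : V) :
    phi tail head ξ v = ξ ⟨cobdry tail head (Pi.single v 1), LinearMap.mem_range_self _ _⟩ := rfl

theorem phi_xi (e : {e : E // ¬ IsLoop tail head e}) :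
    phi tail head (xiF tail head e) = vvec tail head e.1 := by
  funext v
  rw [phi_apply]
  show cobdry tail head (Pi.single v 1) e.1 = _
  simp [cobdry_apply, vvec, Pi.single_apply, eq_comm]

theorem phi_inj : Function.Injective (phi tail head) := by
  intro ξ η h
  have key : ξ.comp (cobdry tail head).rangeRestrict = η.comp (cobdry tail head).rangeRestrict := by
    apply LinearMap.pi_ext
    intro v x
    have h1 : (Pi.single v x : V → ℝ) = x • (Pi.single v 1 : V → ℝ) := by
      rw [← Pi.single_smul, smul_eq_mul, mul_one]
    have h2 := congrFun h v
    rw [phi_apply, phi_apply] at h2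
    simp only [h1, map_smul]
    congr 1
  ext ⟨x, hx⟩
  obtain ⟨f, rfl⟩ := hx
  exact congrFun (congrArg DFunLike.coe key) f

theorem xiF_ne_zero (e : {e : E // ¬ IsLoop tail head e}) : xiF tail head e ≠ 0 := by
  intro h0
  have h1 : xiF tail head e
      ⟨cobdry tail head (Pi.single (head e.1) 1), LinearMap.mem_range_self _ _⟩ = 1 := by
    show cobdry tail head (Pi.single (head e.1) 1) e.1 = 1
    rw [cobdry_apply]
    have : tail e.1 ≠ head e.1 := e.2
    simp [Pi.single_apply, this]
  rw [h0] at h1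
  simp at h1

/-- the evaluation map on non-loop coordinates -/
def jmap : Gsp tail head →ₗ[ℝ] ({e : E // ¬ IsLoop tail head e} → ℝ) :=
  LinearMap.pi fun e => (LinearMap.proj e.1).comp (Gsp tail head).subtype

theorem jmap_inj : Function.Injective (jmap tail head) := by
  rintro ⟨x, hx⟩ ⟨y, hy⟩ h
  apply Subtype.ext
  funext e
  by_cases he : IsLoop tail head e
  · obtain ⟨f, rfl⟩ := hx
    obtain ⟨g, rfl⟩ := hy
    show cobdry tail head f e = cobdry tail head g e
    rw [cobdry_apply, cobdry_apply, ← he, sub_self, sub_self]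
  · exact congrFun h ⟨e, he⟩

theorem dualMap_jmap (e : {e : E // ¬ IsLoop tail head e}) :
    (jmap tail head).dualMap (LinearMap.proj e) = xiF tail head e := rfl

theorem span_xi_top :
    Submodule.span ℝ (Set.range (xiF tail head)) = ⊤ := by
  rw [eq_top_iff]
  rintro ψ -
  obtain ⟨χ, rfl⟩ := LinearMap.dualMap_surjective_of_injective (jmap_inj tail head) ψ
  have hχ : χ = ∑ e : {e : E // ¬ IsLoop tail head e},
      χ (Pi.single e 1) • LinearMap.proj e := by
    apply LinearMap.pi_ext
    intro i x
    have h1 : (Pi.single i x : {e : E // ¬ IsLoop tail head e} → ℝ)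
        = x • (Pi.single i 1 : {e : E // ¬ IsLoop tail head e} → ℝ) := by
      rw [← Pi.single_smul, smul_eq_mul, mul_one]
    simp [h1, LinearMap.proj_apply, Pi.single_apply, mul_comm]
  rw [hχ, map_sum]
  apply Submodule.sum_mem
  intro e _
  rw [map_smul]
  exact Submodule.smul_mem _ _ (Submodule.subset_span ⟨e, (dualMap_jmap tail head e).symm⟩)

theorem sum_single (s : Finset V) (a : V) :
    ∑ u ∈ s, Pi.single a (1:ℝ) u = if a ∈ s then 1 else 0 := by
  simp [Pi.single_apply, Finset.sum_ite_eq' s a (fun _ => (1:ℝ))]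

/-- an edge-step connectivity gives integer span membership of vertex differences -/
theorem diff_mem_zspan_of_conn {T : Set E} {v w : V}
    (h : Relation.ReflTransGen
      (fun a b => ∃ e ∈ T, (tail e = a ∧ head e = b) ∨ (tail e = b ∧ head e = a)) v w) :
    Pi.single v (1:ℝ) - Pi.single w 1 ∈ Submodule.span ℤ (vvec tail head '' T) := by
  induction h with
  | refl => simp
  | tail _ hbc ih =>
      rename_i b c _
      obtain ⟨e, heT, hor⟩ := hbc
      have hv : (Pi.single v 1 : V → ℝ) - Pi.single c 1
          = ((Pi.single v 1 : V → ℝ) - Pi.single b 1) + ((Pi.single b 1 : V → ℝ) - Pi.single c 1) :=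
        (sub_add_sub_cancel _ _ _).symm
      rw [hv]
      refine Submodule.add_mem _ ih ?_
      rcases hor with ⟨h1, h2⟩ | ⟨h1, h2⟩
      · have : Pi.single b (1:ℝ) - Pi.single c 1 = -vvec tail head e := by
          simp [vvec, h1, h2]
        rw [this]
        exact Submodule.neg_mem _ (Submodule.subset_span ⟨e, heT, rfl⟩)
      · have : Pi.single b (1:ℝ) - Pi.single c 1 = vvec tail head e := by
          simp [vvec, h1, h2]
        rw [this]
        exact Submodule.subset_span ⟨e, heT, rfl⟩

theorem diff_mem_rspan_of_conn {T : Set E} {v w : V}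
    (h : Relation.ReflTransGen
      (fun a b => ∃ e ∈ T, (tail e = a ∧ head e = b) ∨ (tail e = b ∧ head e = a)) v w) :
    Pi.single v (1:ℝ) - Pi.single w 1 ∈ Submodule.span ℝ (vvec tail head '' T) :=
  Submodule.span_subset_span ℤ ℝ _ (diff_mem_zspan_of_conn tail head h)

theorem conn_of_diff_mem_span {T : Set E}
    (hT : ∀ v w : V, Pi.single v (1:ℝ) - Pi.single w 1
      ∈ Submodule.span ℝ (vvec tail head '' T)) :
    GraphConnVia tail head T := by
  classical
  intro v w
  by_contra hw
  set R := fun a b : V => ∃ e ∈ T, (tail e = a ∧ head e = b) ∨ (tail e = b ∧ head e = a) with hR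
  set Cfin : Finset V := Finset.univ.filter (fun u => Relation.ReflTransGen R v u) with hC
  have key : ∀ x ∈ Submodule.span ℝ (vvec tail head '' T), ∑ u ∈ Cfin, x u = 0 := by
    intro x hx
    induction hx using Submodule.span_induction with
    | mem x hx =>
        obtain ⟨e, heT, rfl⟩ := hx
        have hiff : Relation.ReflTransGen R v (tail e) ↔ Relation.ReflTransGen R v (head e) :=
          ⟨fun h => h.tail ⟨e, heT, Or.inl ⟨rfl, rfl⟩⟩,
           fun h => h.tail ⟨e, heT, Or.inr ⟨rfl, rfl⟩⟩⟩
        have hmem : (tail e ∈ Cfin) ↔ (head e ∈ Cfin) := by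
          simp only [hC, Finset.mem_filter, Finset.mem_univ, true_and]
          exact hiff
        simp only [vvec, Pi.sub_apply, Finset.sum_sub_distrib, sum_single]
        by_cases h : head e ∈ Cfin
        · simp [h, hmem.mpr h]
        · have h2 : tail e ∉ Cfin := fun hh => h (hmem.mp hh)
          simp [h, h2]
    | zero => simp
    | add x y _ _ ihx ihy =>
        simp only [Pi.add_apply, Finset.sum_add_distrib, ihx, ihy, add_zero]
    | smul r x _ ihx =>
        simp only [Pi.smul_apply, smul_eq_mul, ← Finset.mul_sum, ihx, mul_zero]
  have h1 := key _ (hT v w)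
  have hv : v ∈ Cfin := by
    simp only [hC, Finset.mem_filter, Finset.mem_univ, true_and]
    exact Relation.ReflTransGen.refl
  have hwC : w ∉ Cfin := by
    simp only [hC, Finset.mem_filter, Finset.mem_univ, true_and]
    exact hw
  rw [Finset.sum_congr rfl (fun u _ => rfl)] at h1
  simp only [Pi.sub_apply, Finset.sum_sub_distrib, sum_single, if_pos hv, if_neg hwC] at h1
  norm_num at h1

/-- the set of elementary vertex differences -/
def diffs (V : Type*) [DecidableEq V] : Set (V → ℝ) :=
  Set.range (fun p : V × V => Pi.single p.1 (1:ℝ) - Pi.single p.2 1)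

theorem vvec_mem_diffs (e : E) : vvec tail head e ∈ diffs V := ⟨(head e, tail e), rfl⟩

theorem span_vvec_eq_span_diffs {T : Set E} (h : GraphConnVia tail head T) :
    Submodule.span ℝ (vvec tail head '' T) = Submodule.span ℝ (diffs V) := by
  apply le_antisymm
  · rw [Submodule.span_le]
    rintro _ ⟨e, -, rfl⟩
    exact Submodule.subset_span (vvec_mem_diffs tail head e)
  · rw [Submodule.span_le]
    rintro _ ⟨⟨v, w⟩, rfl⟩
    exact diff_mem_rspan_of_conn tail head (h v w)

theorem zspan_vvec_eq_zspan_diffs {T : Set E} (h : GraphConnVia tail head T) :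
    Submodule.span ℤ (vvec tail head '' T) = Submodule.span ℤ (diffs V) := by
  apply le_antisymm
  · rw [Submodule.span_le]
    rintro _ ⟨e, -, rfl⟩
    exact Submodule.subset_span (vvec_mem_diffs tail head e)
  · rw [Submodule.span_le]
    rintro _ ⟨⟨v, w⟩, rfl⟩
    exact diff_mem_zspan_of_conn tail head (h v w)

theorem image_phi_xi (S : Set {e : E // ¬ IsLoop tail head e}) :
    phi tail head '' (xiF tail head '' S) = vvec tail head '' (Subtype.val '' S) := by
  rw [Set.image_image, Set.image_image]
  exact Set.image_congr fun e _ => phi_xi tail head e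

theorem map_phi_span (S : Set {e : E // ¬ IsLoop tail head e}) :
    Submodule.map (phi tail head) (Submodule.span ℝ (xiF tail head '' S))
      = Submodule.span ℝ (vvec tail head '' (Subtype.val '' S)) := by
  rw [Submodule.map_span, image_phi_xi]

theorem map_phi_zspan (S : Set {e : E // ¬ IsLoop tail head e}) :
    Submodule.map ((phi tail head).restrictScalars ℤ) (Submodule.span ℤ (xiF tail head '' S))
      = Submodule.span ℤ (vvec tail head '' (Subtype.val '' S)) := by
  rw [Submodule.map_span]
  show Submodule.span ℤ (phi tail head '' (xiF tail head '' S)) = _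
  rw [image_phi_xi]

variable (hconn : GraphConnVia tail head Set.univ)
include hconn

theorem span_xiS_top_iff (S : Set {e : E // ¬ IsLoop tail head e}) :
    Submodule.span ℝ (xiF tail head '' S) = ⊤
      ↔ GraphConnVia tail head (Subtype.val '' S) := by
  constructor
  · intro h
    apply conn_of_diff_mem_span
    intro v w
    have h1 : ∀ e : E, vvec tail head e
        ∈ Submodule.span ℝ (vvec tail head '' (Subtype.val '' S)) := by
      intro e
      by_cases he : IsLoop tail head e
      · have he' : tail e = head e := he
        have : vvec tail head e = 0 := by simp [vvec, he']
        rw [this]; exact Submodule.zero_mem _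
      · rw [← map_phi_span, ← phi_xi tail head ⟨e, he⟩]
        exact Submodule.mem_map_of_mem (h ▸ Submodule.mem_top)
    have h2 := diff_mem_rspan_of_conn tail head (T := Set.univ) (hconn v w)
    revert h2
    have h3 : Submodule.span ℝ (vvec tail head '' Set.univ)
        ≤ Submodule.span ℝ (vvec tail head '' (Subtype.val '' S)) := by
      rw [Submodule.span_le]
      rintro _ ⟨e, -, rfl⟩
      exact h1 e
    exact fun h2 => h3 h2
  · intro h
    rw [eq_top_iff, ← span_xi_top tail head, Submodule.span_le]
    rintro _ ⟨f, rfl⟩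
    have h1 : phi tail head (xiF tail head f)
        ∈ Submodule.map (phi tail head) (Submodule.span ℝ (xiF tail head '' S)) := by
      rw [map_phi_span, phi_xi]
      exact (span_vvec_eq_span_diffs tail head h).symm ▸
        Submodule.subset_span (vvec_mem_diffs tail head f.1)
    obtain ⟨y, hy, hxy⟩ := h1
    rwa [← phi_inj tail head hxy]

omit hconn in
theorem li_xi_iff (S : Set {e : E // ¬ IsLoop tail head e}) :
    LinearIndependent ℝ (fun i : S => xiF tail head i) ↔
      LinearIndependent ℝ (fun i : S => vvec tail head i.1.1) := by
  have hfun : (fun i : S => vvec tail head i.1.1)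
      = (phi tail head) ∘ (fun i : S => xiF tail head i) :=
    funext fun i => (phi_xi tail head i.1).symm
  rw [hfun, LinearMap.linearIndependent_iff (phi tail head)
    (LinearMap.ker_eq_bot.mpr (phi_inj tail head))]

omit hconn in
theorem maxLinIndep_iff (S : Set {e : E // ¬ IsLoop tail head e}) :
    MaxLinIndep (xiF tail head) S ↔
      (LinearIndependent ℝ (fun i : S => xiF tail head i)
        ∧ Submodule.span ℝ (xiF tail head '' S) = ⊤) := by
  constructor
  · rintro ⟨hli, hmax⟩
    refine ⟨hli, ?_⟩
    have hall : ∀ f, xiF tail head f ∈ Submodule.span ℝ (xiF tail head '' S) := by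
      intro f
      by_cases hfS : f ∈ S
      · exact Submodule.subset_span (Set.mem_image_of_mem _ hfS)
      · by_contra hns
        have hins : LinearIndependent ℝ
            (fun i : (insert f S : Set _) => xiF tail head i) :=
          (linearIndepOn_insert hfS).mpr ⟨hli, hns⟩
        have := hmax _ (Set.subset_insert f S) hins
        exact hfS (this ▸ Set.mem_insert f S)
    rw [eq_top_iff, ← span_xi_top tail head, Submodule.span_le]
    rintro _ ⟨f, rfl⟩
    exact hall f
  · rintro ⟨hli, hsp⟩
    refine ⟨hli, fun T hST hTli => ?_⟩
    apply le_antisymm _ hST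
    intro f hfT
    by_contra hfS
    have hnm : xiF tail head f
        ∉ Submodule.span ℝ ((fun i : T => xiF tail head i) '' (Subtype.val ⁻¹' S)) :=
      hTli.notMem_span_image (s := Subtype.val ⁻¹' S) (x := ⟨f, hfT⟩) (by simpa using hfS)
    apply hnm
    have himg : (fun i : T => xiF tail head i) '' (Subtype.val ⁻¹' S)
        = xiF tail head '' S := by
      ext x
      constructor
      · rintro ⟨⟨i, hiT⟩, hiS, rfl⟩
        exact ⟨i, hiS, rfl⟩
      · rintro ⟨i, hiS, rfl⟩
        exact ⟨⟨i, hST hiS⟩, hiS, rfl⟩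
    rw [himg, hsp]
    exact Submodule.mem_top

theorem maxLinIndep_iff' (S : Set {e : E // ¬ IsLoop tail head e}) :
    MaxLinIndep (xiF tail head) S ↔
      (LinearIndependent ℝ (fun i : S => vvec tail head i.1.1)
        ∧ GraphConnVia tail head (Subtype.val '' S)) := by
  rw [maxLinIndep_iff tail head S, li_xi_iff tail head S,
    span_xiS_top_iff tail head hconn S]

omit hconn in
theorem vvec_zero_of_loop {e : E} (h : IsLoop tail head e) : vvec tail head e = 0 := by
  have h' : tail e = head e := h
  simp [vvec, h']

end

/-- the `sum of coordinates` functional -/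
noncomputable def sumF (V : Type*) [Fintype V] : (V → ℝ) →ₗ[ℝ] ℝ :=
  ∑ u : V, LinearMap.proj u

theorem sumF_apply {V : Type*} [Fintype V] (x : V → ℝ) : sumF V x = ∑ u : V, x u := by
  simp [sumF]

theorem span_diffs_eq_ker (V : Type*) [Fintype V] [DecidableEq V] [Nonempty V] :
    Submodule.span ℝ (diffs V) = LinearMap.ker (sumF V) := by
  apply le_antisymm
  · rw [Submodule.span_le]
    rintro _ ⟨⟨v, w⟩, rfl⟩
    simp [LinearMap.mem_ker, sumF_apply, Finset.sum_sub_distrib, sum_single]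
  · intro x hx
    obtain ⟨v₀⟩ := ‹Nonempty V›
    have hx0 : ∑ u : V, x u = 0 := by
      rw [← sumF_apply]; exact hx
    have h1 : ∑ v : V, x v • (Pi.single v 1 : V → ℝ) = x := by
      have h2 : ∀ v : V, x v • (Pi.single v 1 : V → ℝ) = Pi.single v (x v) := fun v => by
        rw [← Pi.single_smul, smul_eq_mul, mul_one]
      rw [Finset.sum_congr rfl fun v _ => h2 v, Finset.univ_sum_single]
    have hxx : x = ∑ v : V, x v • ((Pi.single v 1 : V → ℝ) - Pi.single v₀ 1) := by
      have : ∑ v : V, x v • ((Pi.single v 1 : V → ℝ) - Pi.single v₀ 1)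
          = (∑ v : V, x v • (Pi.single v 1 : V → ℝ))
            - (∑ v : V, x v) • (Pi.single v₀ 1 : V → ℝ) := by
        rw [Finset.sum_smul]
        rw [← Finset.sum_sub_distrib]
        refine Finset.sum_congr rfl fun v _ => ?_
        rw [smul_sub]
      rw [this, h1, hx0, zero_smul, sub_zero]
    rw [hxx]
    exact Submodule.sum_mem _ fun v _ =>
      Submodule.smul_mem _ _ (Submodule.subset_span ⟨(v, v₀), rfl⟩)

theorem finrank_span_diffs (V : Type*) [Fintype V] [DecidableEq V] :
    Module.finrank ℝ (Submodule.span ℝ (diffs V)) = Fintype.card V - 1 := by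
  rcases isEmpty_or_nonempty V with hV | hV
  · have h1 : Module.finrank ℝ (Submodule.span ℝ (diffs V)) ≤ Module.finrank ℝ (V → ℝ) :=
      Submodule.finrank_le _
    rw [Module.finrank_fintype_fun_eq_card] at h1
    have h2 : Fintype.card V = 0 := Fintype.card_eq_zero
    omega
  · rw [span_diffs_eq_ker]
    have hrk := LinearMap.finrank_range_add_finrank_ker (sumF V)
    have hsur : LinearMap.range (sumF V) = ⊤ := by
      rw [LinearMap.range_eq_top]
      intro r
      refine ⟨Pi.single (Classical.arbitrary V) r, ?_⟩
      have : (Pi.single (Classical.arbitrary V) r : V → ℝ)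
          = r • (Pi.single (Classical.arbitrary V) 1 : V → ℝ) := by
        rw [← Pi.single_smul, smul_eq_mul, mul_one]
      rw [sumF_apply, this]
      simp only [Pi.smul_apply, smul_eq_mul, ← Finset.mul_sum, sum_single]
      simp
    rw [hsur, finrank_top, Module.finrank_fintype_fun_eq_card, Module.finrank_self] at hrk
    omega

noncomputable section
variable {V E : Type*} [Fintype V] [Fintype E] [DecidableEq V] [DecidableEq E]
  (tail head : E → V) (hconn : GraphConnVia tail head Set.univ)
include hconn

theorem range_vvec_family (S : Set {e : E // ¬ IsLoop tail head e}) :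
    Set.range (fun i : S => vvec tail head i.1.1)
      = vvec tail head '' (Subtype.val '' S) := by
  rw [Set.image_image]
  exact (Set.image_eq_range (fun x : {e : E // ¬ IsLoop tail head e} => vvec tail head x.1) S).symm

omit hconn in
theorem ncard_eq_card {α : Type*} (s : Set α) [Fintype s] : s.ncard = Fintype.card s := by
  rw [← Nat.card_coe_set_eq, Nat.card_eq_fintype_card]

theorem ncard_of_max {S : Set {e : E // ¬ IsLoop tail head e}}
    (h : MaxLinIndep (xiF tail head) S) : S.ncard = Fintype.card V - 1 := by
  classical
  rw [maxLinIndep_iff' tail head hconn] at h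
  obtain ⟨hli, hcn⟩ := h
  haveI : Fintype S := S.toFinite.fintype
  have hfr := finrank_span_eq_card hli
  rw [range_vvec_family tail head hconn, span_vvec_eq_span_diffs tail head hcn,
    finrank_span_diffs] at hfr
  rw [ncard_eq_card S, ← hfr]

theorem no_loops_of_tree {T : Set E} (hcard : T.ncard = Fintype.card V - 1)
    (hcn : GraphConnVia tail head T) : ∀ e ∈ T, ¬ IsLoop tail head e := by
  classical
  intro e₀ he₀ hl
  have hv0 : vvec tail head e₀ = 0 := vvec_zero_of_loop tail head hl
  have hsub : vvec tail head '' T ⊆ insert 0 (vvec tail head '' (T \ {e₀})) := by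
    rintro _ ⟨e, heT, rfl⟩
    by_cases he : e = e₀
    · subst he; rw [hv0]; exact Set.mem_insert _ _
    · exact Set.mem_insert_of_mem _ ⟨e, ⟨heT, he⟩, rfl⟩
  have hsp : Submodule.span ℝ (diffs V) ≤ Submodule.span ℝ (vvec tail head '' (T \ {e₀})) := by
    rw [← span_vvec_eq_span_diffs tail head hcn]
    refine (Submodule.span_le.mpr ?_)
    intro x hx
    have := hsub hx
    rw [← Submodule.span_insert_zero]
    exact Submodule.subset_span this
  have hfr1 : Module.finrank ℝ (Submodule.span ℝ (diffs V))
      ≤ Module.finrank ℝ (Submodule.span ℝ (vvec tail head '' (T \ {e₀}))) :=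
    Submodule.finrank_mono hsp
  haveI : Fintype (vvec tail head '' (T \ {e₀}) : Set (V → ℝ)) :=
    ((T \ {e₀}).toFinite.image _).fintype
  have hfr2 := finrank_span_le_card (R := ℝ) (vvec tail head '' (T \ {e₀}))
  rw [Set.toFinset_card, ← ncard_eq_card] at hfr2
  have hfr3 : (vvec tail head '' (T \ {e₀})).ncard ≤ (T \ {e₀}).ncard :=
    Set.ncard_image_le (T \ {e₀}).toFinite
  have hfr4 : (T \ {e₀}).ncard = T.ncard - 1 :=
    Set.ncard_diff_singleton_of_mem he₀
  have hT1 : 1 ≤ T.ncard := (Set.ncard_pos T.toFinite).mpr ⟨e₀, he₀⟩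
  have hfr5 := finrank_span_diffs V
  omega

theorem max_of_tree {T : Set E} (hcard : T.ncard = Fintype.card V - 1)
    (hcn : GraphConnVia tail head T) :
    ∃ S : Set {e : E // ¬ IsLoop tail head e},
      MaxLinIndep (xiF tail head) S ∧ Subtype.val '' S = T := by
  classical
  have hnl := no_loops_of_tree tail head hconn hcard hcn
  set S : Set {e : E // ¬ IsLoop tail head e} := Subtype.val ⁻¹' T with hS
  have himg : Subtype.val '' S = T := by
    ext e
    constructor
    · rintro ⟨⟨i, hi⟩, hiT, rfl⟩
      exact hiT
    · intro heT
      exact ⟨⟨e, hnl e heT⟩, heT, rfl⟩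
  refine ⟨S, ?_, himg⟩
  rw [maxLinIndep_iff' tail head hconn]
  refine ⟨?_, by rw [himg]; exact hcn⟩
  set Wd := Submodule.span ℝ (diffs V) with hWd
  set b : S → Wd := fun i =>
    ⟨vvec tail head i.1.1, Submodule.subset_span (vvec_mem_diffs tail head i.1.1)⟩ with hb
  haveI : Fintype S := S.toFinite.fintype
  have hspan : ⊤ ≤ Submodule.span ℝ (Set.range b) := by
    have hmap : Submodule.map Wd.subtype (Submodule.span ℝ (Set.range b))
        = Submodule.map Wd.subtype ⊤ := by
      rw [Submodule.map_span, Submodule.map_subtype_top]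
      have himg2 : Wd.subtype '' Set.range b = vvec tail head '' T := by
        rw [← Set.range_comp]
        rw [show (Wd.subtype ∘ b) = (fun i : S => vvec tail head i.1.1) from rfl]
        rw [range_vvec_family tail head hconn, himg]
      rw [himg2, span_vvec_eq_span_diffs tail head hcn]
    have := Submodule.map_injective_of_injective (Submodule.injective_subtype Wd) hmap
    rw [this]
  have hcard2 : Fintype.card S = Module.finrank ℝ Wd := by
    rw [hWd, finrank_span_diffs, ← ncard_eq_card S]
    have h1 : (Subtype.val '' S).ncard = S.ncard :=
      Set.ncard_image_of_injective S Subtype.val_injective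
    rw [← hcard, ← himg, h1]
  have hli_b := linearIndependent_of_top_le_span_of_card_eq_finrank hspan hcard2
  have hli := hli_b.map' Wd.subtype (Submodule.ker_subtype Wd)
  exact hli

theorem conj3 : ∃ M : Submodule ℤ (Module.Dual ℝ (Gsp tail head)),
    ∀ S, MaxLinIndep (xiF tail head) S →
      Submodule.span ℤ (xiF tail head '' S) = M := by
  by_cases hex : ∃ S, MaxLinIndep (xiF tail head) S
  · obtain ⟨S₀, hS₀⟩ := hex
    refine ⟨Submodule.span ℤ (xiF tail head '' S₀), fun S hS => ?_⟩
    apply Submodule.map_injective_of_injective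
      (f := (phi tail head).restrictScalars ℤ) (phi_inj tail head)
    rw [map_phi_zspan, map_phi_zspan,
      zspan_vvec_eq_zspan_diffs tail head ((maxLinIndep_iff' tail head hconn S).mp hS).2,
      zspan_vvec_eq_zspan_diffs tail head ((maxLinIndep_iff' tail head hconn S₀).mp hS₀).2]
  · exact ⟨⊥, fun S hS => absurd ⟨S, hS⟩ hex⟩

theorem conj4 :
    Set.ncard {S | MaxLinIndep (xiF tail head) S}
      = Set.ncard {T : Set E | T.ncard = Nat.card V - 1 ∧ GraphConnVia tail head T} := by
  have hset : {T : Set E | T.ncard = Nat.card V - 1 ∧ GraphConnVia tail head T}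
      = (Set.image (Subtype.val : {e : E // ¬ IsLoop tail head e} → E)) ''
          {S | MaxLinIndep (xiF tail head) S} := by
    ext T
    simp only [Set.mem_setOf_eq, Set.mem_image]
    constructor
    · rintro ⟨hc, hcn⟩
      rw [Nat.card_eq_fintype_card] at hc
      obtain ⟨S, hS, himg⟩ := max_of_tree tail head hconn hc hcn
      exact ⟨S, hS, himg⟩
    · rintro ⟨S, hS, rfl⟩
      refine ⟨?_, ((maxLinIndep_iff' tail head hconn S).mp hS).2⟩
      rw [Set.ncard_image_of_injective S Subtype.val_injective, Nat.card_eq_fintype_card]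
      exact ncard_of_max tail head hconn hS
  rw [hset, Set.ncard_image_of_injective _ (Set.image_injective.mpr Subtype.val_injective)]

end
end Stmt8Aux

/-- The cographic unimodular system: the edge functionals restricted to the cut space
`G_Γ = Im ∂*`, excluding the loops, form a unimodular system whose complexity is the
number of spanning trees of `Γ`. -/
theorem stmt8 {V E : Type*} [Fintype V] [Fintype E] [DecidableEq V] [DecidableEq E]
    (tail head : E → V) (hconn : GraphConnVia tail head Set.univ) :
    (∀ e : {e : E // ¬ IsLoop tail head e},
      ((LinearMap.proj e.1).comp (LinearMap.range (cobdry tail head)).subtype :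
        Module.Dual ℝ (LinearMap.range (cobdry tail head))) ≠ 0) ∧
    Submodule.span ℝ (Set.range fun e : {e : E // ¬ IsLoop tail head e} =>
      ((LinearMap.proj e.1).comp (LinearMap.range (cobdry tail head)).subtype :
        Module.Dual ℝ (LinearMap.range (cobdry tail head)))) = ⊤ ∧
    (∃ M : Submodule ℤ (Module.Dual ℝ (LinearMap.range (cobdry tail head))),
      ∀ S, MaxLinIndep (fun e : {e : E // ¬ IsLoop tail head e} =>
        ((LinearMap.proj e.1).comp (LinearMap.range (cobdry tail head)).subtype)) S →
        Submodule.span ℤ ((fun e : {e : E // ¬ IsLoop tail head e} =>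
          ((LinearMap.proj e.1).comp (LinearMap.range (cobdry tail head)).subtype :
            Module.Dual ℝ (LinearMap.range (cobdry tail head)))) '' S) = M) ∧
    Set.ncard {S | MaxLinIndep (fun e : {e : E // ¬ IsLoop tail head e} =>
        ((LinearMap.proj e.1).comp (LinearMap.range (cobdry tail head)).subtype :
          Module.Dual ℝ (LinearMap.range (cobdry tail head)))) S} =
      Set.ncard {T : Set E | T.ncard = Nat.card V - 1 ∧ GraphConnVia tail head T} := by
  exact ⟨Stmt8Aux.xiF_ne_zero tail head, Stmt8Aux.span_xi_top tail head,
    Stmt8Aux.conj3 tail head hconn, Stmt8Aux.conj4 tail head hconn⟩
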